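/- Let V be a finite set, let 𝒫 be a partition of V, let e ⊆ V be a nonempty finset, and let F be a tree with vertex set e (a connected acyclic graph on e). Then the number of edges of F whose two endpoints lie in distinct blocks of 𝒫 is at least p_𝒫(e) − 1, where p_𝒫(e) is the number of blocks of 𝒫 meeting e. -/

import Mathlib

open scoped Classical
noncomputable section

variable {W : Type*}

/-- `A` is the edge set of a tree with vertex set `e`: no loops, all endpoints in `e`,
acyclic, and any two vertices of `e` are connected. -/
def IsTreeOn (e : Finset W) (A : Finset (Sym2 W)) : Prop :=
  (∀ s ∈ A, ¬ s.IsDiag) ∧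
  (∀ s ∈ A, ∀ v ∈ s, v ∈ e) ∧
  (SimpleGraph.fromEdgeSet (A : Set (Sym2 W))).IsAcyclic ∧
  (∀ x ∈ e, ∀ y ∈ e, (SimpleGraph.fromEdgeSet (A : Set (Sym2 W))).Reachable x y)

/-- Number of blocks of the partition `P` that meet `e`. -/
def pblocks [DecidableEq W] {U : Finset W} (P : Finpartition U) (e : Finset W) : ℕ :=
  (P.parts.filter fun B => (B ∩ e).Nonempty).card

/-- Number of edges in `A` whose two endpoints lie in distinct blocks of `P`. -/
def crossEdges [DecidableEq W] {U : Finset W} (P : Finpartition U) (A : Finset (Sym2 W)) : ℕ :=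
  (A.filter fun s => ∀ B ∈ P.parts, ¬ (∀ v ∈ s, v ∈ B)).card

/-- `k`-weak partition connectivity of the multihypergraph with vertex set `U`
and hyperedge family `E`. -/
def WeaklyPC [DecidableEq W] {ι : Type*} [Fintype ι] (U : Finset W)
    (E : ι → Finset W) (k : ℕ) : Prop :=
  ∀ P : Finpartition U, k * (P.parts.card - 1) ≤ ∑ i, (pblocks P (E i) - 1)

/-- The labelled edge set of the tree assignment `F`: each graph edge is tagged by
the hyperedge occurrence producing it. -/
def LEdges [DecidableEq W] {ι : Type*} [Fintype ι] [DecidableEq ι]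
    (F : ι → Finset (Sym2 W)) : Finset (ι × Sym2 W) :=
  Finset.univ.biUnion fun i => (F i).image fun s => (i, s)

/-- An (ordered) `k`-tree decomposition of the labelled union of the tree assignment `F`:
each labelled edge gets a layer, and the labelled edges of each layer are (bijectively)
the edge set of a spanning tree of `U`. -/
structure KTreeDecomp [DecidableEq W] {ι : Type*} [Fintype ι] [DecidableEq ι]
    (U : Finset W) (F : ι → Finset (Sym2 W)) (k : ℕ) where
  layer : ι × Sym2 W → Fin k
  tree : Fin k → Finset (Sym2 W)
  tree_isTree : ∀ j, IsTreeOn U (tree j)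
  tree_eq : ∀ j, tree j = ((LEdges F).filter fun p => layer p = j).image Prod.snd
  layer_inj : ∀ p ∈ LEdges F, ∀ q ∈ LEdges F, layer p = layer q → p.2 = q.2 → p = q

/-- The signature of a `k`-tree decomposition: `sig D e = ∑ i, i • |E(T_i) ∩ E(F_e)|`. -/
def sig [DecidableEq W] {ι : Type*} [Fintype ι] [DecidableEq ι] {U : Finset W}
    {F : ι → Finset (Sym2 W)} {k : ℕ} (D : KTreeDecomp U F k) (i : ι) : ℕ :=
  ∑ j : Fin k, j.1 * ((F i).filter fun s => D.layer (i, s) = j).card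

/-- `H = (U, E)` has a `k`-distinguishable tree assignment. -/
def Distinguishable [DecidableEq W] {ι : Type*} [Fintype ι] [DecidableEq ι]
    (U : Finset W) (E : ι → Finset W) (k : ℕ) : Prop :=
  ∃ F : ι → Finset (Sym2 W), (∀ i, IsTreeOn (E i) (F i)) ∧
    ∃ D : KTreeDecomp U F k, ∀ D' : KTreeDecomp U F k,
      (∀ i, sig D' i = sig D i) → ∀ p ∈ LEdges F, D'.layer p = D.layer p

/-- The star on `e` centered at `c`. -/
def starOn [DecidableEq W] (e : Finset W) (c : W) : Finset (Sym2 W) :=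
  (e.erase c).image fun u => s(c, u)

/-- Along a walk whose endpoints have different `f`-values, some edge crosses. -/
lemma walk_cross {V : Type*} {β : Type*} {G : SimpleGraph V} (f : V → β) :
    ∀ {x y : V} (w : G.Walk x y), f x ≠ f y →
      ∃ a b : V, s(a, b) ∈ w.edges ∧ f a ≠ f b := by
  intro x y w
  induction w with
  | nil => intro h; exact absurd rfl h
  | @cons u v z h p ih =>
    intro hne
    by_cases huv : f u = f v
    · obtain ⟨a, b, hab, hfab⟩ := ih (fun hvz => hne (huv.trans hvz))
      exact ⟨a, b, by simp [SimpleGraph.Walk.edges_cons, hab], hfab⟩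
    · exact ⟨u, v, by simp [SimpleGraph.Walk.edges_cons], huv⟩

/-- Key lemma: if the vertices of `e` are pairwise connected via edges in `A` (all of whose
endpoints lie in `e`), then for any labelling `f`, the number of edges of `A` whose endpoints
get distinct labels is at least the number of labels appearing on `e`, minus one. -/
lemma key_cross {V : Type*} [DecidableEq V] {β : Type*} [DecidableEq β]
    (A : Finset (Sym2 V)) (e : Finset V)
    (hend : ∀ s ∈ A, ∀ v ∈ s, v ∈ e)
    (hconn : ∀ x ∈ e, ∀ y ∈ e, (SimpleGraph.fromEdgeSet (A : Set (Sym2 V))).Reachable x y) :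
    ∀ f : V → β, (e.image f).card - 1 ≤ (A.filter fun s => ¬ (s.map f).IsDiag).card := by
  classical
  suffices H : ∀ n (f : V → β), (e.image f).card ≤ n →
      (e.image f).card - 1 ≤ (A.filter fun s => ¬ (s.map f).IsDiag).card by
    exact fun f => H _ f le_rfl
  intro n
  induction n with
  | zero => intro f hf; omega
  | succ n ih =>
    intro f hf
    by_cases h1 : (e.image f).card ≤ 1
    · omega
    · -- there are two vertices of `e` with different labels
      push_neg at h1
      obtain ⟨c, hc, d, hd, hcd⟩ := Finset.one_lt_card.1 h1
      obtain ⟨x, hx, rfl⟩ := Finset.mem_image.1 hc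
      obtain ⟨y, hy, rfl⟩ := Finset.mem_image.1 hd
      obtain ⟨w⟩ := hconn x hx y hy
      obtain ⟨a, b, habw, hfab⟩ := walk_cross f w hcd
      have habE : s(a, b) ∈ (SimpleGraph.fromEdgeSet (A : Set (Sym2 V))).edgeSet :=
        w.edges_subset_edgeSet habw
      rw [SimpleGraph.edgeSet_fromEdgeSet] at habE
      have habA : s(a, b) ∈ A := habE.1
      have hae : a ∈ e := hend _ habA a (Sym2.mem_mk_left a b)
      have hbe : b ∈ e := hend _ habA b (Sym2.mem_mk_right a b)
      -- merge the label of `a` into that of `b`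
      set g : V → β := fun v => if f v = f a then f b else f v with hg
      have hgf : ∀ u v : V, f u = f v → g u = g v := by
        intro u v h
        simp only [hg, h]
      have himg : e.image g = insert (f b) ((e.image f).erase (f a)) := by
        ext c
        simp only [Finset.mem_image, Finset.mem_insert, Finset.mem_erase]
        constructor
        · rintro ⟨v, hv, rfl⟩
          by_cases hva : f v = f a
          · left; simp [hg, hva]
          · right
            refine ⟨by simpa [hg, hva] using hva, v, hv, by simp [hg, hva]⟩
        · rintro (rfl | ⟨hcfa, v, hv, rfl⟩)
          · exact ⟨b, hbe, by by_cases h : f b = f a <;> simp [hg, h]⟩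
          · exact ⟨v, hv, by simp [hg, hcfa]⟩
      have hfbmem : f b ∈ (e.image f).erase (f a) :=
        Finset.mem_erase.2 ⟨fun h => hfab h.symm, Finset.mem_image_of_mem f hbe⟩
      have hcardg : (e.image g).card = (e.image f).card - 1 := by
        rw [himg, Finset.insert_eq_self.2 hfbmem,
          Finset.card_erase_of_mem (Finset.mem_image_of_mem f hae)]
      -- the `g`-cross edges are among the `f`-cross edges, minus `s(a,b)`
      have hsub : (A.filter fun s => ¬ (s.map g).IsDiag) ⊆
          (A.filter fun s => ¬ (s.map f).IsDiag).erase s(a, b) := by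
        intro s hs
        rw [Finset.mem_filter] at hs
        refine Finset.mem_erase.2 ⟨?_, Finset.mem_filter.2 ⟨hs.1, ?_⟩⟩
        · rintro rfl
          apply hs.2
          rw [Sym2.map_pair_eq, Sym2.mk_isDiag_iff]
          simp [hg]
        · intro hdiag
          apply hs.2
          induction s using Sym2.inductionOn with
          | hf u v =>
            rw [Sym2.map_pair_eq, Sym2.mk_isDiag_iff] at hdiag ⊢
            exact hgf u v hdiag
      have habcross : s(a, b) ∈ A.filter fun s => ¬ (s.map f).IsDiag := by
        refine Finset.mem_filter.2 ⟨habA, ?_⟩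
        rw [Sym2.map_pair_eq, Sym2.mk_isDiag_iff]
        exact hfab
      have h2 : (A.filter fun s => ¬ (s.map g).IsDiag).card ≤
          (A.filter fun s => ¬ (s.map f).IsDiag).card - 1 := by
        calc _ ≤ ((A.filter fun s => ¬ (s.map f).IsDiag).erase s(a, b)).card :=
              Finset.card_le_card hsub
          _ = _ := Finset.card_erase_of_mem habcross
      have h3 := ih g (by omega)
      have h4 : 1 ≤ (A.filter fun s => ¬ (s.map f).IsDiag).card :=
        Finset.card_pos.2 ⟨_, habcross⟩
      omega

/-- For any tree `F` with vertex set a nonempty finset `e ⊆ V` and any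
partition `𝒫` of `V`, the number of edges of `F` crossing `𝒫` is at least `p_𝒫(e) - 1`. -/
theorem stmt8 {V : Type*} [Fintype V] [DecidableEq V]
    (P : Finpartition (Finset.univ : Finset V)) (e : Finset V) (he : e.Nonempty)
    (A : Finset (Sym2 V)) (hA : IsTreeOn e A) :
    pblocks P e - 1 ≤ crossEdges P A := by
  classical
  set f : V → Finset V := fun v => P.part v with hfdef
  have hmemf : ∀ v : V, v ∈ f v := fun v => P.mem_part (Finset.mem_univ v)
  have hfparts : ∀ v : V, f v ∈ P.parts := fun v => P.part_mem.2 (Finset.mem_univ v)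
  have hfeq : ∀ (v : V) (B : Finset V), B ∈ P.parts → v ∈ B → f v = B := by
    intro v B hB hvB
    exact P.part_eq_of_mem hB hvB
  -- Step 1: pblocks P e = (e.image f).card
  have himg : P.parts.filter (fun B => (B ∩ e).Nonempty) = e.image f := by
    ext B
    simp only [Finset.mem_filter, Finset.mem_image]
    constructor
    · rintro ⟨hB, x, hx⟩
      rw [Finset.mem_inter] at hx
      exact ⟨x, hx.2, hfeq x B hB hx.1⟩
    · rintro ⟨x, hx, rfl⟩
      exact ⟨hfparts x, x, Finset.mem_inter.2 ⟨hmemf x, hx⟩⟩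
  -- Step 2: the cross filter agrees with the `f`-cross filter on A
  have hpt : ∀ s : Sym2 V, ((∀ B ∈ P.parts, ¬ (∀ v ∈ s, v ∈ B)) ↔ ¬ (s.map f).IsDiag) := by
    intro s
    induction s using Sym2.inductionOn with
    | hf a b =>
      simp only [Sym2.map_pair_eq, Sym2.mk_isDiag_iff]
      constructor
      · intro h hab
        exact h (f a) (hfparts a) (by
          intro v hv
          rcases Sym2.mem_iff.1 hv with rfl | rfl
          · exact hmemf v
          · rw [hab]; exact hmemf v)
      · intro h B hB hall
        have ha : a ∈ B := hall a (Sym2.mem_mk_left a b)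
        have hb : b ∈ B := hall b (Sym2.mem_mk_right a b)
        exact h ((hfeq a B hB ha).trans (hfeq b B hB hb).symm)
  rw [pblocks, crossEdges, himg]
  refine le_trans (key_cross A e hA.2.1 hA.2.2.2 f) (Finset.card_le_card ?_)
  intro s hs
  simp only [Finset.mem_filter] at hs ⊢
  exact ⟨hs.1, (hpt s).2 hs.2⟩

end
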